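/- Let H(θ,p) = (1/2)(p²+θ²) + (κ/2)θ² with κ > −1, and let θ_0 ~ N(0, 1/(1+κ)) and p_0 ~ N(0,1) be independent. If the L-step map is [[cos(Lη), χ sin(Lη)],[−χ⁻¹ sin(Lη), cos(Lη)]] with χ ≠ 0, then E[H(θ_L,p_L) − H(θ_0,p_0)] = sin²(Lη) · ρ, where ρ = (1/2)(√(1+κ)·χ − 1/(√(1+κ)·χ))². In particular the expected energy error is nonnegative and bounded above by ρ. -/

import Mathlib

open MeasureTheory ProbabilityTheory Real

open scoped NNReal ENNReal

lemma my_int_sq_exp {b : ℝ} (hb : 0 < b) :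
    ∫ x : ℝ, x ^ 2 * rexp (-b * x ^ 2) = (2 * b)⁻¹ * ∫ x : ℝ, rexp (-b * x ^ 2) := by
  have hexp : Integrable fun x : ℝ => rexp (-b * x ^ 2) := integrable_exp_neg_mul_sq hb
  have hsq : Integrable fun x : ℝ => x ^ 2 * rexp (-b * x ^ 2) := by
    have := integrable_rpow_mul_exp_neg_mul_sq hb (s := 2) (by norm_num)
    have h2 : ∀ x : ℝ, x ^ (2:ℝ) = x ^ 2 := fun x => by
      rw [show (2:ℝ) = ((2:ℕ):ℝ) by norm_num, Real.rpow_natCast]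
    simpa only [h2] using this
  have hderiv : ∀ x : ℝ, HasDerivAt (fun y : ℝ => y * rexp (-b * y ^ 2))
      (rexp (-b * x ^ 2) - 2 * b * (x ^ 2 * rexp (-b * x ^ 2))) x := by
    intro x
    have h1 : HasDerivAt (fun y : ℝ => -b * y ^ 2) (-b * (2 * x)) x :=
      (hasDerivAt_pow 2 x).const_mul (-b) |>.congr_deriv (by ring)
    have := (hasDerivAt_id x).mul h1.exp
    refine this.congr_deriv ?_
    simp
    ring
  have h0 := integral_eq_zero_of_hasDerivAt_of_integrable hderiv
    (hexp.sub (hsq.const_mul _)) (integrable_mul_exp_neg_mul_sq hb)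
  rw [integral_sub hexp (hsq.const_mul _), MeasureTheory.integral_const_mul] at h0
  have hb' : (2 : ℝ) * b ≠ 0 := by positivity
  rw [eq_comm, inv_mul_eq_iff_eq_mul₀ hb']
  linarith

lemma my_int_id_exp {b : ℝ} (hb : 0 < b) :
    ∫ x : ℝ, x * rexp (-b * x ^ 2) = 0 := by
  have hderiv : ∀ x : ℝ, HasDerivAt (fun y : ℝ => -(2 * b)⁻¹ * rexp (-b * y ^ 2))
      (x * rexp (-b * x ^ 2)) x := by
    intro x
    have h1 : HasDerivAt (fun y : ℝ => -b * y ^ 2) (-b * (2 * x)) x :=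
      (hasDerivAt_pow 2 x).const_mul (-b) |>.congr_deriv (by ring)
    have := h1.exp.const_mul (-(2 * b)⁻¹)
    refine this.congr_deriv ?_
    have hb' : (2 : ℝ) * b ≠ 0 := by positivity
    field_simp
  exact integral_eq_zero_of_hasDerivAt_of_integrable hderiv
    (integrable_mul_exp_neg_mul_sq hb) ((integrable_exp_neg_mul_sq hb).const_mul _)

lemma my_gauss_rw {v : ℝ≥0} (hv : v ≠ 0) (g : ℝ → ℝ) :
    ∫ x, g x ∂(gaussianReal 0 v) = ∫ x, gaussianPDFReal 0 v x * g x := by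
  rw [gaussianReal_of_var_ne_zero _ hv]
  have h : gaussianPDF 0 v = fun x => ((Real.toNNReal (gaussianPDFReal 0 v x) : ℝ≥0) : ℝ≥0∞) := rfl
  rw [h, integral_withDensity_eq_integral_smul
    ((measurable_gaussianPDFReal 0 v).real_toNNReal) g]
  congr 1
  ext x
  simp [NNReal.smul_def, Real.coe_toNNReal _ (gaussianPDFReal_nonneg 0 v x)]

lemma my_gauss_integrable {v : ℝ≥0} (hv : v ≠ 0) {g : ℝ → ℝ}
    (hg : Integrable (fun x => gaussianPDFReal 0 v x * g x)) :
    Integrable g (gaussianReal 0 v) := by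
  rw [gaussianReal_of_var_ne_zero _ hv]
  have h : gaussianPDF 0 v = fun x => ((Real.toNNReal (gaussianPDFReal 0 v x) : ℝ≥0) : ℝ≥0∞) := rfl
  rw [h, integrable_withDensity_iff_integrable_smul
    ((measurable_gaussianPDFReal 0 v).real_toNNReal)]
  apply hg.congr
  filter_upwards with x
  simp [NNReal.smul_def, Real.coe_toNNReal _ (gaussianPDFReal_nonneg 0 v x)]

lemma my_pdf_eq {v : ℝ≥0} (hv : v ≠ 0) (x : ℝ) :
    gaussianPDFReal 0 v x = (√(2 * π * v))⁻¹ * rexp (-(2 * (v:ℝ))⁻¹ * x ^ 2) := by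
  have hv' : (0:ℝ) < v := lt_of_le_of_ne (v.coe_nonneg) (by exact_mod_cast (Ne.symm hv))
  rw [gaussianPDFReal]
  congr 1
  rw [sub_zero]
  congr 1
  field_simp

lemma my_gauss_m1 {v : ℝ≥0} (hv : v ≠ 0) : ∫ x, x ∂(gaussianReal 0 v) = 0 := by
  have hv' : (0:ℝ) < v := lt_of_le_of_ne v.coe_nonneg (by exact_mod_cast (Ne.symm hv))
  have hb : 0 < (2 * (v:ℝ))⁻¹ := by positivity
  have hpdf : ∀ x : ℝ, gaussianPDFReal 0 v x * x
      = (√(2 * π * v))⁻¹ * (x * rexp (-(2 * (v:ℝ))⁻¹ * x ^ 2)) := fun x => by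
    rw [my_pdf_eq hv]; ring
  rw [my_gauss_rw hv]
  simp_rw [hpdf]
  rw [MeasureTheory.integral_const_mul, my_int_id_exp hb, mul_zero]

lemma my_gauss_m2 {v : ℝ≥0} (hv : v ≠ 0) : ∫ x, x ^ 2 ∂(gaussianReal 0 v) = (v:ℝ) := by
  have hv' : (0:ℝ) < v := lt_of_le_of_ne v.coe_nonneg (by exact_mod_cast (Ne.symm hv))
  have hb : 0 < (2 * (v:ℝ))⁻¹ := by positivity
  have hpdf : ∀ x : ℝ, gaussianPDFReal 0 v x * x ^ 2
      = (√(2 * π * v))⁻¹ * (x ^ 2 * rexp (-(2 * (v:ℝ))⁻¹ * x ^ 2)) := fun x => by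
    rw [my_pdf_eq hv]; ring
  have hone : (√(2 * π * v))⁻¹ * ∫ x : ℝ, rexp (-(2 * (v:ℝ))⁻¹ * x ^ 2) = 1 := by
    rw [← MeasureTheory.integral_const_mul, ← integral_gaussianPDFReal_eq_one 0 hv]
    congr 1
    ext x
    rw [my_pdf_eq hv]
  rw [my_gauss_rw hv]
  simp_rw [hpdf]
  rw [MeasureTheory.integral_const_mul, my_int_sq_exp hb, ← mul_assoc,
    mul_comm ((√(2 * π * (v:ℝ)))⁻¹) _, mul_assoc, hone, mul_one]
  field_simp

lemma my_gauss_int_sq {v : ℝ≥0} (hv : v ≠ 0) :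
    Integrable (fun x : ℝ => x ^ 2) (gaussianReal 0 v) := by
  have hv' : (0:ℝ) < v := lt_of_le_of_ne v.coe_nonneg (by exact_mod_cast (Ne.symm hv))
  have hb : 0 < (2 * (v:ℝ))⁻¹ := by positivity
  refine my_gauss_integrable hv ?_
  have hsq : Integrable fun x : ℝ => x ^ 2 * rexp (-(2 * (v:ℝ))⁻¹ * x ^ 2) := by
    have := integrable_rpow_mul_exp_neg_mul_sq hb (s := 2) (by norm_num)
    have h2 : ∀ x : ℝ, x ^ (2:ℝ) = x ^ 2 := fun x => by
      rw [show (2:ℝ) = ((2:ℕ):ℝ) by norm_num, Real.rpow_natCast]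
    simpa only [h2] using this
  refine (hsq.const_mul ((√(2 * π * v))⁻¹)).congr ?_
  filter_upwards with x
  rw [my_pdf_eq hv]; ring

lemma my_gauss_int_id {v : ℝ≥0} (hv : v ≠ 0) :
    Integrable (fun x : ℝ => x) (gaussianReal 0 v) := by
  have hv' : (0:ℝ) < v := lt_of_le_of_ne v.coe_nonneg (by exact_mod_cast (Ne.symm hv))
  have hb : 0 < (2 * (v:ℝ))⁻¹ := by positivity
  refine my_gauss_integrable hv ?_
  refine ((integrable_mul_exp_neg_mul_sq hb).const_mul ((√(2 * π * v))⁻¹)).congr ?_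
  filter_upwards with x
  rw [my_pdf_eq hv]; ring

/-- Expected energy error at stationarity. For the model Hamiltonian
`H(θ,p) = (1/2)(p²+θ²) + (κ/2)θ²` with `κ > -1`, with `θ₀ ~ N(0, 1/(1+κ))` and
`p₀ ~ N(0,1)` independent, and `(θ_L,p_L)` given by the `L`-step map
`[[cos(Lη), χ sin(Lη)],[-χ⁻¹ sin(Lη), cos(Lη)]]` with `χ ≠ 0`, the expected energy
error equals `sin²(Lη)·ρ` where `ρ = (1/2)(√(1+κ)χ - 1/(√(1+κ)χ))²`; in particular
it is nonnegative and bounded above by `ρ`. -/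
theorem stmt6 (κ : ℝ) (hκ : -1 < κ) (η χ : ℝ) (hχ : χ ≠ 0) (L : ℕ)
    (H : ℝ → ℝ → ℝ)
    (hH : ∀ θ p, H θ p = (1 / 2) * (p ^ 2 + θ ^ 2) + (κ / 2) * θ ^ 2)
    (θL pL : ℝ × ℝ → ℝ)
    (hθL : ∀ x, θL x = Real.cos (L * η) * x.1 + χ * Real.sin (L * η) * x.2)
    (hpL : ∀ x, pL x = -χ⁻¹ * Real.sin (L * η) * x.1 + Real.cos (L * η) * x.2)
    (μ : Measure (ℝ × ℝ))
    (hμ : μ = (gaussianReal 0 (Real.toNNReal (1 / (1 + κ)))).prod (gaussianReal 0 1))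
    (ρ : ℝ)
    (hρ : ρ = (1 / 2) * (Real.sqrt (1 + κ) * χ - 1 / (Real.sqrt (1 + κ) * χ)) ^ 2) :
    (∫ x, (H (θL x) (pL x) - H x.1 x.2) ∂μ) = Real.sin (L * η) ^ 2 * ρ ∧
      0 ≤ (∫ x, (H (θL x) (pL x) - H x.1 x.2) ∂μ) ∧
      (∫ x, (H (θL x) (pL x) - H x.1 x.2) ∂μ) ≤ ρ := by
  have hκ0 : (0:ℝ) < 1 + κ := by linarith
  set c := Real.cos (L * η) with hc
  set s := Real.sin (L * η) with hs
  set v1 : ℝ≥0 := Real.toNNReal (1 / (1 + κ)) with hv1def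
  have hv1 : v1 ≠ 0 := by
    rw [hv1def]
    simp only [ne_eq, Real.toNNReal_eq_zero, not_le]
    positivity
  have hv1c : (v1:ℝ) = 1 / (1 + κ) := Real.coe_toNNReal _ (by positivity)
  have h1 : (1:ℝ≥0) ≠ 0 := one_ne_zero
  have hfun : ∀ x : ℝ × ℝ, H (θL x) (pL x) - H x.1 x.2
      = (((1+κ)/2) * (c^2-1) + (1/2) * χ⁻¹^2 * s^2) * (x.1^2 * 1)
        + (((1+κ)*c*χ*s - χ⁻¹*s*c) * (x.1 * x.2)
          + (((1+κ)/2)*χ^2*s^2 + (1/2)*(c^2-1)) * (1 * x.2^2)) := by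
    intro x
    rw [hH, hH, hθL, hpL]
    ring
  have hval : (∫ x, (H (θL x) (pL x) - H x.1 x.2) ∂μ)
      = (((1+κ)/2) * (c^2-1) + (1/2) * χ⁻¹^2 * s^2) * (1/(1+κ))
        + (((1+κ)/2)*χ^2*s^2 + (1/2)*(c^2-1)) := by
    rw [hμ]
    simp_rw [hfun]
    rw [integral_add, integral_add, MeasureTheory.integral_const_mul,
      MeasureTheory.integral_const_mul, MeasureTheory.integral_const_mul,
      integral_prod_mul (f := fun y : ℝ => y ^ 2) (g := fun _ : ℝ => (1:ℝ)),
      integral_prod_mul (f := fun y : ℝ => y) (g := fun y : ℝ => y),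
      integral_prod_mul (f := fun _ : ℝ => (1:ℝ)) (g := fun y : ℝ => y ^ 2),
      my_gauss_m2 hv1, my_gauss_m2 h1, my_gauss_m1 hv1, my_gauss_m1 h1]
    · simp [hv1c]
    · exact ((my_gauss_int_id hv1).mul_prod (my_gauss_int_id h1)).const_mul _
    · exact ((integrable_const (μ := gaussianReal 0 v1) (1:ℝ)).mul_prod (my_gauss_int_sq h1)).const_mul _
    · exact ((my_gauss_int_sq hv1).mul_prod (integrable_const 1)).const_mul _
    · exact (((my_gauss_int_id hv1).mul_prod (my_gauss_int_id h1)).const_mul _).add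
        (((integrable_const (μ := gaussianReal 0 v1) (1:ℝ)).mul_prod (my_gauss_int_sq h1)).const_mul _)
  have hsq : Real.sqrt (1+κ) ^ 2 = 1 + κ := Real.sq_sqrt hκ0.le
  have hsq0 : Real.sqrt (1+κ) ≠ 0 := by positivity
  have hcs : c^2 = 1 - s^2 := by rw [hc, hs, Real.cos_sq']
  have hρ0 : 0 ≤ ρ := by rw [hρ]; positivity
  have hmain : (∫ x, (H (θL x) (pL x) - H x.1 x.2) ∂μ) = s ^ 2 * ρ := by
    rw [hval, hρ, hcs]
    generalize hq : Real.sqrt (1+κ) = a at hsq hsq0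
    rw [← hsq]
    have ha2 : a ^ 2 ≠ 0 := pow_ne_zero 2 hsq0
    field_simp
    ring
  refine ⟨hmain, ?_, ?_⟩
  · rw [hmain]; positivity
  · rw [hmain]
    calc s ^ 2 * ρ ≤ 1 * ρ := by
          apply mul_le_mul_of_nonneg_right _ hρ0
          rw [hs]
          exact Real.sin_sq_le_one _
    _ = ρ := one_mul ρ
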